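/- Let S̃ be a planar surface and let Õ ⊂ S̃ be a subset such that: (1) Õ is discrete as a subset of S̃, and (2) the collection Γ = {β_õ : õ ∈ Õ} of basepoint changing isomorphisms forms a group of translation automorphisms of S̃. Then there is a translation surface S ∈ M whose universal cover is S̃ and such that p_S^{-1}(o_S) = Õ, where p_S : S̃ → S is the universal covering map. -/

import Mathlib

open Set Topology Filter

noncomputable section

/-- The plane `ℝ²`, modeled as `Fin 2 → ℝ`. -/
abbrev Plane : Type := Fin 2 → ℝ

/-- Two partial homeomorphisms (charts) to the plane are *translation compatible* if
their transition function is locally the restriction of a translation. -/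
def TranslationCompatible {X : Type} [TopologicalSpace X]
    (c₁ c₂ : OpenPartialHomeomorph X Plane) : Prop :=
  ∀ x ∈ c₁.source ∩ c₂.source, ∃ v : Plane,
    ∀ᶠ y in 𝓝 x, y ∈ c₁.source ∩ c₂.source → c₂ y = c₁ y + v

/-- A translation structure: a connected surface equipped with a maximal atlas of charts
to the plane whose transition functions are locally translations.  (The charts are local
homeomorphisms from open subsets of `X` to `ℝ²`; since the transitions are translations,
the atlas determines an orientation, so orientability is automatic.) -/
structure TranslationSurface : Type 1 where
  X : Type
  [top : TopologicalSpace X]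
  [t2 : T2Space X]
  [conn : ConnectedSpace X]
  charts : Set (OpenPartialHomeomorph X Plane)
  chart_cover : ∀ x : X, ∃ c ∈ charts, x ∈ c.source
  compat : ∀ c₁ ∈ charts, ∀ c₂ ∈ charts, TranslationCompatible c₁ c₂
  maximal : ∀ c : OpenPartialHomeomorph X Plane,
      (∀ c' ∈ charts, TranslationCompatible c c' ∧ TranslationCompatible c' c) →
      c ∈ charts

attribute [instance] TranslationSurface.top TranslationSurface.t2 TranslationSurface.conn

/-- A pointed translation surface. -/
structure PointedTranslationSurface : Type 1 extends TranslationSurface where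
  basepoint : X

/-- A pointed translation surface with a second marked point. -/
structure TwoPointedTranslationSurface : Type 1 extends PointedTranslationSurface where
  pt : X

/-- An immersion of the subset `A` of the pointed translation surface `S` into the subset
`B` of the pointed translation surface `T`: a continuous basepoint-respecting map which is
locally a translation in the charts of the two translation structures. -/
structure Immersion (S T : PointedTranslationSurface) (A : Set S.X) (B : Set T.X) :
    Type where
  toFun : A → T.X
  continuous : Continuous toFun
  mapsTo : ∀ a : A, toFun a ∈ B
  base_mem : S.basepoint ∈ A
  map_base : toFun ⟨S.basepoint, base_mem⟩ = T.basepoint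
  loc : ∀ a : A, ∃ c₁ ∈ S.charts, ∃ c₂ ∈ T.charts, ∃ v : Plane,
      (a : S.X) ∈ c₁.source ∧
      ∀ a' : A, (a' : S.X) ∈ c₁.source →
        toFun a' ∈ c₂.source ∧ c₂ (toFun a') = c₁ (a' : S.X) + v

/-- The push-forward of a chart under a homeomorphism. -/
def pushforward {X Y : Type} [TopologicalSpace X] [TopologicalSpace Y]
    (h : X ≃ₜ Y) (c : OpenPartialHomeomorph X Plane) : OpenPartialHomeomorph Y Plane :=
  (h.symm.toOpenPartialHomeomorph).trans c

/-- `h` carries the translation atlas of `S` to that of `T`. -/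
def IsTranslationIsoCharts (S T : TranslationSurface) (h : S.X ≃ₜ T.X) : Prop :=
  T.charts = {c' | ∃ c ∈ S.charts, c' = pushforward h c}

/-- Isomorphism of pointed translation surfaces. -/
def Iso (S T : PointedTranslationSurface) : Prop :=
  ∃ h : S.X ≃ₜ T.X, h S.basepoint = T.basepoint ∧
    IsTranslationIsoCharts S.toTranslationSurface T.toTranslationSurface h

/-- Isomorphism of two-pointed translation surfaces. -/
def Iso2 (S T : TwoPointedTranslationSurface) : Prop :=
  ∃ h : S.X ≃ₜ T.X, h S.basepoint = T.basepoint ∧ h S.pt = T.pt ∧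
    IsTranslationIsoCharts S.toTranslationSurface T.toTranslationSurface h

/-- The moduli space `M` of all pointed translation structures. -/
def ModuliSpace : Type 1 := Quot Iso

/-- The total space `E` of all two-pointed translation structures. -/
def ESpace : Type 1 := Quot Iso2

def ModuliSpace.mk (S : PointedTranslationSurface) : ModuliSpace := Quot.mk Iso S

def ESpace.mk (T : TwoPointedTranslationSurface) : ESpace := Quot.mk Iso2 T

/-- The canonical projection `π : E → M`. -/
def ESpace.proj : ESpace → ModuliSpace :=
  Quot.lift (fun T => ModuliSpace.mk T.toPointedTranslationSurface) (by
    rintro a b ⟨h, hb, hp, hc⟩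
    exact Quot.sound ⟨h, hb, hc⟩)

/-- A closed disk in a pointed translation surface: a path-connected set containing the
basepoint in its interior and homeomorphic to a closed disk. -/
def IsClosedDisk (S : PointedTranslationSurface) (D : Set S.X) : Prop :=
  IsPathConnected D ∧ S.basepoint ∈ interior D ∧
    Nonempty (↥D ≃ₜ ↥(Metric.closedBall (0 : Plane) 1))

/-- An open disk in a pointed translation surface: a path-connected set containing the
basepoint and homeomorphic to an open disk. -/
def IsOpenDisk (S : PointedTranslationSurface) (U : Set S.X) : Prop :=
  IsPathConnected U ∧ S.basepoint ∈ U ∧ Nonempty (↥U ≃ₜ Plane)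

/-- `M_↝(A)`: the set of (classes of) surfaces into which `A` immerses. -/
def Mimm (S : PointedTranslationSurface) (A : Set S.X) : Set ModuliSpace :=
  {m | ∃ T : PointedTranslationSurface, m = ModuliSpace.mk T ∧
        Nonempty (Immersion S T A Set.univ)}

/-- `M_+(D,U)`: surfaces admitting an immersion of `D` whose basepoint lies in `ι(U)`. -/
def Mplus (S : PointedTranslationSurface) (D U : Set S.X) : Set ModuliSpace :=
  {m | ∃ T : PointedTranslationSurface, m = ModuliSpace.mk T ∧
        ∃ ι : Immersion S T D Set.univ, ∃ x : D, (x : S.X) ∈ U ∧ ι.toFun x = T.basepoint}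

/-- `M_−(D,K)`: surfaces admitting an immersion of `D` whose basepoint avoids `ι(K)`. -/
def Mminus (S : PointedTranslationSurface) (D K : Set S.X) : Set ModuliSpace :=
  {m | ∃ T : PointedTranslationSurface, m = ModuliSpace.mk T ∧
        ∃ ι : Immersion S T D Set.univ, ∀ x : D, (x : S.X) ∈ K → ι.toFun x ≠ T.basepoint}

/-- The defining subbasis of the immersive topology on `M`. -/
def MSubbasis : Set (Set ModuliSpace) :=
  {V | ∃ S : PointedTranslationSurface,
      (∃ D, IsClosedDisk S D ∧ V = Mimm S D) ∨
      (∃ U, IsOpenDisk S U ∧ V = (Mimm S U)ᶜ) ∨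
      (∃ D U, IsClosedDisk S D ∧ IsOpen U ∧ U ⊆ interior D ∧ V = Mplus S D U) ∨
      (∃ D K, IsClosedDisk S D ∧ IsClosed K ∧ K ⊆ D ∧ V = Mminus S D K)}

/-- The immersive topology on `M`: the coarsest topology making the subbasic sets open. -/
instance : TopologicalSpace ModuliSpace := TopologicalSpace.generateFrom MSubbasis

/-- `E_+(D,U)`: pairs `(T,t)` admitting an immersion of `D` with `t ∈ ι(U)`. -/
def Eplus (S : PointedTranslationSurface) (D U : Set S.X) : Set ESpace :=
  {e | ∃ T : TwoPointedTranslationSurface, e = ESpace.mk T ∧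
        ∃ ι : Immersion S T.toPointedTranslationSurface D Set.univ,
          ∃ x : D, (x : S.X) ∈ U ∧ ι.toFun x = T.pt}

/-- The defining subbasis of the immersive topology on `E`. -/
def ESubbasis : Set (Set ESpace) :=
  {V | ∃ W : Set ModuliSpace, IsOpen W ∧ V = ESpace.proj ⁻¹' W} ∪
  {V | ∃ (S : PointedTranslationSurface) (D U : Set S.X),
        IsClosedDisk S D ∧ IsOpen U ∧ U ⊆ interior D ∧ V = Eplus S D U}

/-- The immersive topology on `E`: the coarsest topology making `π` continuous and the
sets `E_+(D,U)` open. -/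
instance : TopologicalSpace ESpace := TopologicalSpace.generateFrom ESubbasis

/-- `p : P → S` is locally a translation with respect to the two translation structures. -/
def IsLocalTranslationMap (P S : PointedTranslationSurface) (p : P.X → S.X) : Prop :=
  ∀ x : P.X, ∃ c₁ ∈ P.charts, ∃ c₂ ∈ S.charts, ∃ v : Plane,
    x ∈ c₁.source ∧ ∀ y ∈ c₁.source, p y ∈ c₂.source ∧ c₂ (p y) = c₁ y + v

/-- `(P,p)` is the universal cover of the translation surface `S`: `p` is a
basepoint-preserving covering map from a simply connected surface which respects the
translation structures (so that the structure on `P` is the pullback of that on `S`). -/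
def IsTranslationCover (P S : PointedTranslationSurface) (p : P.X → S.X) : Prop :=
  IsCoveringMap p ∧ SimplyConnectedSpace P.X ∧ p P.basepoint = S.basepoint ∧
    IsLocalTranslationMap P S p

/-- A planar surface: a translation surface homeomorphic to an open disk. -/
def IsPlanar (P : PointedTranslationSurface) : Prop := Nonempty (P.X ≃ₜ Plane)

/-- `M̃ ⊆ M`: the set of classes of planar surfaces. -/
def Mtilde : Set ModuliSpace :=
  {m | ∃ P : PointedTranslationSurface, m = ModuliSpace.mk P ∧ IsPlanar P}

/-- The collection `Γ` of basepoint changing isomorphisms associated to `O ⊆ P`: the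
translation automorphisms of `P` carrying some point of `O` to the basepoint. -/
def bcAutos (P : PointedTranslationSurface) (O : Set P.X) : Set (P.X ≃ₜ P.X) :=
  {h | IsTranslationIsoCharts P.toTranslationSurface P.toTranslationSurface h ∧
       ∃ o ∈ O, h o = P.basepoint}
section QCAux

open Metric

/-! ### Basic lemmas about `pushforward` -/

lemma pf_apply {X Y : Type} [TopologicalSpace X] [TopologicalSpace Y]
    (h : X ≃ₜ Y) (c : OpenPartialHomeomorph X Plane) (y : Y) :
    pushforward h c y = c (h.symm y) := rfl

lemma pf_source {X Y : Type} [TopologicalSpace X] [TopologicalSpace Y]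
    (h : X ≃ₜ Y) (c : OpenPartialHomeomorph X Plane) :
    (pushforward h c).source = {y | h.symm y ∈ c.source} := by
  simp [pushforward, OpenPartialHomeomorph.trans_source]
  rfl

lemma pf_target {X Y : Type} [TopologicalSpace X] [TopologicalSpace Y]
    (h : X ≃ₜ Y) (c : OpenPartialHomeomorph X Plane) :
    (pushforward h c).target = c.target := by
  simp [pushforward, OpenPartialHomeomorph.trans_target]

lemma pf_symm_apply {X Y : Type} [TopologicalSpace X] [TopologicalSpace Y]
    (h : X ≃ₜ Y) (c : OpenPartialHomeomorph X Plane) (u : Plane) :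
    (pushforward h c).symm u = h (c.symm u) := rfl

/-- Evaluation of the compatibility condition: the translation vector is the difference
of the chart values. -/
lemma compat_eval (T : TranslationSurface) {c₁ c₂ : OpenPartialHomeomorph T.X Plane}
    (h₁ : c₁ ∈ T.charts) (h₂ : c₂ ∈ T.charts) {z : T.X}
    (m₁ : z ∈ c₁.source) (m₂ : z ∈ c₂.source) :
    ∀ᶠ y in 𝓝 z, y ∈ c₁.source ∧ y ∈ c₂.source ∧ c₂ y = c₁ y + (c₂ z - c₁ z) := by
  obtain ⟨v, hv⟩ := T.compat c₁ h₁ c₂ h₂ z ⟨m₁, m₂⟩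
  have hz : c₂ z = c₁ z + v := hv.self_of_nhds ⟨m₁, m₂⟩
  have hveq : v = c₂ z - c₁ z := by rw [hz]; abel
  filter_upwards [hv, c₁.open_source.mem_nhds m₁, c₂.open_source.mem_nhds m₂]
    with y hy hy1 hy2
  exact ⟨hy1, hy2, by rw [hy ⟨hy1, hy2⟩, hveq]⟩

/-- Points on a segment based at a point of a ball stay in a bigger ball. -/
lemma ball_seg {x c u : Plane} {r : ℝ} (h : dist x c + ‖u‖ < r) :
    ∀ t : ℝ, t ∈ Set.Icc (0:ℝ) 1 → x + t • u ∈ ball c r := by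
  intro t ht
  have h1 : dist (x + t • u) x ≤ ‖u‖ := by
    rw [dist_eq_norm]
    simp only [add_sub_cancel_left, norm_smul, Real.norm_eq_abs]
    calc |t| * ‖u‖ ≤ 1 * ‖u‖ := by
          apply mul_le_mul_of_nonneg_right _ (norm_nonneg u)
          rw [abs_le]; exact ⟨le_trans (by norm_num) ht.1, ht.2⟩
      _ = ‖u‖ := one_mul _
  have := dist_triangle (x + t • u) x c
  exact mem_ball.2 (lt_of_le_of_lt (le_trans this (add_le_add_left h1 _)) (by linarith))

/-- **Continuation along a segment**: the inverses of two charts agree along a segment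
(based at a common point) that stays inside both targets. -/
lemma seg (T : TranslationSurface) {e₁ e₂ : OpenPartialHomeomorph T.X Plane}
    (h₁ : e₁ ∈ T.charts) (h₂ : e₂ ∈ T.charts) {p : T.X}
    (hp₁ : p ∈ e₁.source) (hp₂ : p ∈ e₂.source) (u : Plane)
    (ht₁ : ∀ t : ℝ, t ∈ Set.Icc (0:ℝ) 1 → e₁ p + t • u ∈ e₁.target)
    (ht₂ : ∀ t : ℝ, t ∈ Set.Icc (0:ℝ) 1 → e₂ p + t • u ∈ e₂.target) :
    ∀ t : ℝ, t ∈ Set.Icc (0:ℝ) 1 →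
      e₁.symm (e₁ p + t • u) = e₂.symm (e₂ p + t • u) := by
  set f₁ : unitInterval → T.X := fun t => e₁.symm (e₁ p + (t : ℝ) • u) with hf₁
  set f₂ : unitInterval → T.X := fun t => e₂.symm (e₂ p + (t : ℝ) • u) with hf₂
  have hc₁ : Continuous f₁ := by
    apply e₁.continuousOn_symm.comp_continuous
    · exact continuous_const.add (continuous_subtype_val.smul continuous_const)
    · exact fun t => ht₁ t t.2
  have hc₂ : Continuous f₂ := by
    apply e₂.continuousOn_symm.comp_continuous
    · exact continuous_const.add (continuous_subtype_val.smul continuous_const)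
    · exact fun t => ht₂ t t.2
  set A : Set unitInterval := {t | f₁ t = f₂ t} with hA
  have hclosed : IsClosed A := isClosed_eq hc₁ hc₂
  have hopen : IsOpen A := by
    rw [isOpen_iff_mem_nhds]
    intro t₀ ht₀
    have hz₁ : f₁ t₀ ∈ e₁.source := e₁.map_target (ht₁ t₀ t₀.2)
    have hz₂ : f₁ t₀ ∈ e₂.source := by rw [ht₀]; exact e₂.map_target (ht₂ t₀ t₀.2)
    have he₁ : e₁ (f₁ t₀) = e₁ p + (t₀ : ℝ) • u := e₁.right_inv (ht₁ t₀ t₀.2)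
    have he₂ : e₂ (f₁ t₀) = e₂ p + (t₀ : ℝ) • u := by rw [ht₀]; exact e₂.right_inv (ht₂ t₀ t₀.2)
    have hev := compat_eval T h₁ h₂ hz₁ hz₂
    have hvval : e₂ (f₁ t₀) - e₁ (f₁ t₀) = e₂ p - e₁ p := by rw [he₁, he₂]; abel
    have hcont : ContinuousAt f₁ t₀ := hc₁.continuousAt
    have hev' := hcont.eventually hev
    filter_upwards [hev'] with t ht
    obtain ⟨ht1, ht2, hteq⟩ := ht
    have he₁t : e₁ (f₁ t) = e₁ p + (t : ℝ) • u := e₁.right_inv (ht₁ t t.2)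
    have : e₂ (f₁ t) = e₂ p + (t : ℝ) • u := by
      rw [hteq, he₁t, hvval]; abel
    show f₁ t = f₂ t
    calc f₁ t = e₂.symm (e₂ (f₁ t)) := (e₂.left_inv ht2).symm
      _ = e₂.symm (e₂ p + (t : ℝ) • u) := by rw [this]
  have hne : A.Nonempty := by
    refine ⟨⟨0, by norm_num, by norm_num⟩, ?_⟩
    show f₁ _ = f₂ _
    simp only [hf₁, hf₂]
    norm_num
    rw [e₁.left_inv hp₁, e₂.left_inv hp₂]
  have huniv : A = Set.univ := IsClopen.eq_univ ⟨hclosed, hopen⟩ hne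
  intro t ht
  have : (⟨t, ht⟩ : unitInterval) ∈ A := huniv ▸ Set.mem_univ _
  exact this

end QCAux
section QCAux2
open Metric

variable {P : PointedTranslationSurface}

lemma pf_mem_charts {g : P.X ≃ₜ P.X}
    (hg : IsTranslationIsoCharts P.toTranslationSurface P.toTranslationSurface g)
    {c : OpenPartialHomeomorph P.X Plane} (hc : c ∈ P.charts) :
    pushforward g c ∈ P.charts := by
  have : P.toTranslationSurface.charts = _ := hg
  rw [this]
  exact ⟨c, hc, rfl⟩

/-- **Local translation lemma**: if a translation automorphism displaces a point by `v`
in a chart, then it does so in a neighborhood. -/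
lemma LL {g : P.X ≃ₜ P.X}
    (hg : IsTranslationIsoCharts P.toTranslationSurface P.toTranslationSurface g)
    {c : OpenPartialHomeomorph P.X Plane} (hc : c ∈ P.charts) {z₀ : P.X} {v : Plane}
    (hz₀ : z₀ ∈ c.source) (hgz₀ : g z₀ ∈ c.source) (hv : c (g z₀) = c z₀ + v) :
    ∀ᶠ z in 𝓝 z₀, z ∈ c.source ∧ g z ∈ c.source ∧ c (g z) = c z + v := by
  set e := pushforward g c with he_def
  have he : e ∈ P.charts := pf_mem_charts hg hc
  have hm : g z₀ ∈ e.source := by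
    rw [he_def, pf_source]
    simpa using hz₀
  have hev := compat_eval P.toTranslationSurface he hc hm hgz₀
  have hoffset : c (g z₀) - e (g z₀) = v := by
    rw [he_def, pf_apply]
    simp only [Homeomorph.symm_apply_apply]
    rw [hv]; abel
  have hcont : ContinuousAt (⇑g) z₀ := g.continuous.continuousAt
  filter_upwards [hcont.eventually hev] with z hz
  obtain ⟨hz1, hz2, hz3⟩ := hz
  have hz1' : z ∈ c.source := by
    rw [he_def, pf_source] at hz1
    simpa using hz1
  refine ⟨hz1', hz2, ?_⟩
  have : e (g z) = c z := by rw [he_def, pf_apply]; simp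
  rw [hz3, this, hoffset]

/-- **Chart independence**: the displacement property transfers between charts with
enough room. -/
lemma CI {c c' : OpenPartialHomeomorph P.X Plane} (hc : c ∈ P.charts) (hc' : c' ∈ P.charts)
    {z : P.X} {v : Plane} {r : ℝ}
    (hz : z ∈ c.source) (hz' : z ∈ c'.source)
    (hb : ball (c z) r ⊆ c.target) (hb' : ball (c' z) r ⊆ c'.target) (hvr : ‖v‖ < r)
    {w : P.X} (hw : w ∈ c.source) (hcw : c w = c z + v) :
    w ∈ c'.source ∧ c' w = c' z + v := by
  have hseg1 : ∀ t : ℝ, t ∈ Set.Icc (0:ℝ) 1 → c z + t • v ∈ c.target := by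
    intro t ht
    exact hb (ball_seg (by simpa using hvr) t ht)
  have hseg2 : ∀ t : ℝ, t ∈ Set.Icc (0:ℝ) 1 → c' z + t • v ∈ c'.target := by
    intro t ht
    exact hb' (ball_seg (by simpa using hvr) t ht)
  have := seg P.toTranslationSurface hc hc' hz hz' v hseg1 hseg2 1 (by norm_num)
  simp only [one_smul] at this
  have hw' : c.symm (c z + v) = w := by rw [← hcw]; exact c.left_inv hw
  rw [hw'] at this
  have hmem : c' z + v ∈ c'.target := by simpa using hseg2 1 (by norm_num)
  constructor
  · rw [this]; exact c'.map_target hmem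
  · rw [this]; exact c'.right_inv hmem

/-- **Orbit transfer**: if `g` carries `a` into the chart `d`, it carries nearby points
(in chart `c`) to correspondingly displaced points in `d`. -/
lemma OT {g : P.X ≃ₜ P.X}
    (hg : IsTranslationIsoCharts P.toTranslationSurface P.toTranslationSurface g)
    {c d : OpenPartialHomeomorph P.X Plane} (hc : c ∈ P.charts) (hd : d ∈ P.charts)
    {a b : P.X} (ha : a ∈ c.source) (hb : b ∈ c.source) (hga : g a ∈ d.source)
    (hseg1 : ∀ t : ℝ, t ∈ Set.Icc (0:ℝ) 1 → c a + t • (c b - c a) ∈ c.target)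
    (hseg2 : ∀ t : ℝ, t ∈ Set.Icc (0:ℝ) 1 → d (g a) + t • (c b - c a) ∈ d.target) :
    g b ∈ d.source ∧ d (g b) = d (g a) + (c b - c a) := by
  set e := pushforward g c with he_def
  have he : e ∈ P.charts := pf_mem_charts hg hc
  have hpe : g a ∈ e.source := by rw [he_def, pf_source]; simpa using ha
  have hea : e (g a) = c a := by rw [he_def, pf_apply]; simp
  have het : e.target = c.target := by rw [he_def, pf_target]
  have hseg1' : ∀ t : ℝ, t ∈ Set.Icc (0:ℝ) 1 → e (g a) + t • (c b - c a) ∈ e.target := by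
    intro t ht; rw [hea, het]; exact hseg1 t ht
  have := seg P.toTranslationSurface he hd hpe hga (c b - c a) hseg1' hseg2 1 (by norm_num)
  simp only [one_smul] at this
  have h1 : e (g a) + (c b - c a) = c b := by rw [hea]; abel
  rw [h1] at this
  have h2 : e.symm (c b) = g b := by
    rw [he_def, pf_symm_apply, c.left_inv hb]
  rw [h2] at this
  have hmem : d (g a) + (c b - c a) ∈ d.target := by simpa using hseg2 1 (by norm_num)
  exact ⟨this ▸ d.map_target hmem, this ▸ d.right_inv hmem⟩

/-- A translation automorphism with a fixed point is the identity. -/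
lemma free {g : P.X ≃ₜ P.X}
    (hg : IsTranslationIsoCharts P.toTranslationSurface P.toTranslationSurface g)
    {x : P.X} (hx : g x = x) : g = Homeomorph.refl P.X := by
  set A : Set P.X := {z | g z = z} with hA
  have hclosed : IsClosed A := isClosed_eq g.continuous continuous_id
  have hopen : IsOpen A := by
    rw [isOpen_iff_mem_nhds]
    intro z₀ hz₀
    obtain ⟨c, hc, hcz⟩ := P.chart_cover z₀
    have hgz : g z₀ ∈ c.source := by rwa [show g z₀ = z₀ from hz₀]
    have hv : c (g z₀) = c z₀ + 0 := by rw [show g z₀ = z₀ from hz₀, add_zero]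
    filter_upwards [LL hg hc hcz hgz hv] with z hz
    obtain ⟨h1, h2, h3⟩ := hz
    rw [add_zero] at h3
    exact c.injOn h2 h1 h3
  have huniv : A = Set.univ := IsClopen.eq_univ ⟨hclosed, hopen⟩ ⟨x, hx⟩
  ext z
  have : z ∈ A := huniv ▸ Set.mem_univ z
  exact this

/-- Every point lies in a chart with a definite ball around its image. -/
lemma chart_ball (T : TranslationSurface) (x : T.X) :
    ∃ c ∈ T.charts, x ∈ c.source ∧ ∃ ε > 0, ball (c x) ε ⊆ c.target := by
  obtain ⟨c, hc, hx⟩ := T.chart_cover x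
  obtain ⟨ε, hε, hball⟩ := Metric.isOpen_iff.1 c.open_target (c x) (c.map_source hx)
  exact ⟨c, hc, hx, ε, hε, hball⟩

end QCAux2
section QCAux3
open Metric

variable {P : PointedTranslationSurface}

/-- **Uniform chart radius** on a compact set. -/
lemma RAD (T : TranslationSurface) {K : Set T.X} (hK : IsCompact K) :
    ∃ r₀ > 0, ∀ z ∈ K, ∃ c ∈ T.charts, z ∈ c.source ∧ ball (c z) r₀ ⊆ c.target := by
  have hch : ∀ z : T.X, ∃ c ∈ T.charts, z ∈ c.source ∧ ∃ ε > 0, ball (c z) ε ⊆ c.target :=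
    fun z => chart_ball T z
  choose ch hch1 hch2 ε hε hball using hch
  set W : T.X → Set T.X := fun z => (ch z).source ∩ (ch z) ⁻¹' ball ((ch z) z) (ε z / 2)
    with hW
  have hWopen : ∀ z, IsOpen (W z) := fun z =>
    (ch z).continuousOn.isOpen_inter_preimage (ch z).open_source isOpen_ball
  have hWmem : ∀ z, z ∈ W z := fun z =>
    ⟨hch2 z, by simp only [Set.mem_preimage, mem_ball, dist_self]; have := hε z; linarith⟩
  have hcover : K ⊆ ⋃ z : T.X, W z := fun z hz => Set.mem_iUnion.2 ⟨z, hWmem z⟩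
  obtain ⟨t, ht⟩ := hK.elim_finite_subcover W hWopen hcover
  by_cases htne : t.Nonempty
  · refine ⟨t.inf' htne (fun z => ε z / 2), ?_, ?_⟩
    · show (0:ℝ) < _
      rw [Finset.lt_inf'_iff htne (f := fun z => ε z / 2) (a := 0)]
      intro z _
      have := hε z; linarith
    · intro z hz
      obtain ⟨i, hi, hzi⟩ := Set.mem_iUnion₂.1 (ht hz)
      refine ⟨ch i, hch1 i, hzi.1, ?_⟩
      intro u hu
      apply hball i
      have h1 : dist u ((ch i) z) < ε i / 2 := by
        calc dist u ((ch i) z) < t.inf' htne (fun z => ε z / 2) := mem_ball.1 hu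
          _ ≤ ε i / 2 := Finset.inf'_le _ hi
      have h2 : dist ((ch i) z) ((ch i) i) < ε i / 2 := mem_ball.1 hzi.2
      rw [mem_ball]
      calc dist u ((ch i) i) ≤ dist u ((ch i) z) + dist ((ch i) z) ((ch i) i) :=
            dist_triangle _ _ _
        _ < ε i := by linarith
  · refine ⟨1, one_pos, ?_⟩
    intro z hz
    exfalso
    obtain ⟨i, hi, _⟩ := Set.mem_iUnion₂.1 (ht hz)
    exact htne ⟨i, hi⟩

/-- **Propagation along a path**: a translation automorphism that displaces the start of
a path by a small vector `v` (in a chart with uniform room) displaces every point of the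
path by `v`. -/
lemma path_prop {g : P.X ≃ₜ P.X}
    (hg : IsTranslationIsoCharts P.toTranslationSurface P.toTranslationSurface g)
    {φ : unitInterval → P.X} (hφ : Continuous φ) {r₀ : ℝ} (hr₀ : 0 < r₀)
    (hrad : ∀ t, ∃ c ∈ P.charts, φ t ∈ c.source ∧ ball (c (φ t)) r₀ ⊆ c.target)
    {v : Plane} (hv : ‖v‖ < r₀ / 2)
    (h0 : ∃ c ∈ P.charts, φ 0 ∈ c.source ∧ ball (c (φ 0)) r₀ ⊆ c.target ∧
      g (φ 0) ∈ c.source ∧ c (g (φ 0)) = c (φ 0) + v) :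
    ∀ t, ∃ c ∈ P.charts, φ t ∈ c.source ∧ ball (c (φ t)) r₀ ⊆ c.target ∧
      g (φ t) ∈ c.source ∧ c (g (φ t)) = c (φ t) + v := by
  set J : Set unitInterval := {t | ∃ c ∈ P.charts, φ t ∈ c.source ∧
    ball (c (φ t)) r₀ ⊆ c.target ∧ g (φ t) ∈ c.source ∧ c (g (φ t)) = c (φ t) + v} with hJ
  have hvpos : 0 ≤ ‖v‖ := norm_nonneg v
  -- key step : transfer the property to any nearby point in any `r₀`-chart
  have step : ∀ (c : OpenPartialHomeomorph P.X Plane), c ∈ P.charts →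
      ∀ z₀, z₀ ∈ c.source → ball (c z₀) r₀ ⊆ c.target →
      g z₀ ∈ c.source → c (g z₀) = c z₀ + v →
      ∀ z, z ∈ c.source → g z ∈ c.source → c (g z) = c z + v →
      ∀ (c' : OpenPartialHomeomorph P.X Plane), c' ∈ P.charts → z ∈ c'.source →
      ball (c' z) r₀ ⊆ c'.target → dist (c z) (c z₀) < r₀ - ‖v‖ →
      g z ∈ c'.source ∧ c' (g z) = c' z + v := by
    intro c hc z₀ hz₀ hb hgz₀ hveq z hzc hgzc hgzeq c' hc' hzc' hb' hdist
    have hrpos : (0:ℝ) < r₀ - dist (c z) (c z₀) := by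
      have := dist_nonneg (x := c z) (y := c z₀)
      linarith
    refine CI (r := r₀ - dist (c z) (c z₀)) hc hc' hzc hzc' ?_ ?_ (by linarith) hgzc hgzeq
    · intro u hu
      apply hb
      rw [mem_ball] at hu ⊢
      calc dist u (c z₀) ≤ dist u (c z) + dist (c z) (c z₀) := dist_triangle _ _ _
        _ < r₀ := by linarith
    · intro u hu
      apply hb'
      rw [mem_ball] at hu ⊢
      have := dist_nonneg (x := c z) (y := c z₀)
      linarith
  have hopen : ∀ t₀ ∈ J, J ∈ 𝓝 t₀ := by
    intro t₀ ht₀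
    obtain ⟨c, hc, hφc, hb, hgφ, heq⟩ := ht₀
    have hev := LL hg hc hφc hgφ heq
    have hcontc : ContinuousAt (⇑c) (φ t₀) := c.continuousAt hφc
    have hpos : (0:ℝ) < r₀ - ‖v‖ := by linarith
    have hD : ∀ᶠ z in 𝓝 (φ t₀), dist (c z) (c (φ t₀)) < r₀ - ‖v‖ := by
      have hmem : ∀ᶠ u in 𝓝 (c (φ t₀)), u ∈ ball (c (φ t₀)) (r₀ - ‖v‖) :=
        isOpen_ball.eventually_mem (mem_ball_self hpos)
      filter_upwards [hcontc.eventually hmem] with z hz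
      exact mem_ball.1 hz
    have hall := (hφ.continuousAt (x := t₀)).eventually (hev.and hD)
    filter_upwards [hall] with s hs
    obtain ⟨⟨hs1, hs2, hs3⟩, hs4⟩ := hs
    obtain ⟨c', hc', hφc', hb'⟩ := hrad s
    have := step c hc (φ t₀) hφc hb hgφ heq (φ s) hs1 hs2 hs3 c' hc' hφc' hb' hs4
    exact ⟨c', hc', hφc', hb', this.1, this.2⟩
  have hclosed : closure J ⊆ J := by
    intro t₀ ht₀
    obtain ⟨c, hc, hφc, hb⟩ := hrad t₀
    have hpos : (0:ℝ) < r₀ - ‖v‖ := by linarith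
    set E : Set unitInterval :=
      φ ⁻¹' (c.source ∩ (⇑c) ⁻¹' ball (c (φ t₀)) (r₀ - ‖v‖)) with hE
    have hEopen : IsOpen E :=
      (c.continuousOn.isOpen_inter_preimage c.open_source isOpen_ball).preimage hφ
    have hEt₀ : t₀ ∈ E := ⟨hφc, by simp [mem_ball, dist_self]; linarith⟩
    have hmemtgt : c (φ t₀) + v ∈ c.target := by
      apply hb
      rw [mem_ball, dist_eq_norm]
      simpa using (by linarith : ‖v‖ < r₀)
    -- on `J ∩ E` the map `g ∘ φ` agrees with a chart translation
    have hagree : ∀ s ∈ J ∩ E, g (φ s) = c.symm (c (φ s) + v) := by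
      rintro s ⟨⟨c₁, hc₁, hm₁, hb₁, hgm₁, heq₁⟩, hsE⟩
      obtain ⟨hφsc, hdball⟩ := hsE
      have hd : dist (c (φ s)) (c (φ t₀)) < r₀ - ‖v‖ := mem_ball.1 hdball
      have hdn : (0:ℝ) ≤ dist (c (φ s)) (c (φ t₀)) := dist_nonneg
      have hCI := CI (r := r₀ - dist (c (φ s)) (c (φ t₀))) hc₁ hc hm₁ hφsc
        (fun u hu => hb₁ (by rw [mem_ball] at hu ⊢; linarith))
        (fun u hu => hb (by
          rw [mem_ball] at hu ⊢
          calc dist u (c (φ t₀)) ≤ dist u (c (φ s)) + dist (c (φ s)) (c (φ t₀)) :=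
                dist_triangle _ _ _
            _ < r₀ := by linarith))
        (by linarith) hgm₁ heq₁
      have : c (g (φ s)) = c (φ s) + v := hCI.2
      rw [← this]
      exact (c.left_inv hCI.1).symm
    have hcl : t₀ ∈ closure (J ∩ E) := by
      rw [mem_closure_iff_nhds] at ht₀ ⊢
      intro N hN
      obtain ⟨y, ⟨hyN, hyE⟩, hyJ⟩ := ht₀ (N ∩ E) (Filter.inter_mem hN (hEopen.mem_nhds hEt₀))
      exact ⟨y, hyN, hyJ, hyE⟩
    haveI hnb : (𝓝[J ∩ E] t₀).NeBot := mem_closure_iff_nhdsWithin_neBot.1 hcl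
    have hlim1 : Filter.Tendsto (fun s => g (φ s)) (𝓝[J ∩ E] t₀) (𝓝 (g (φ t₀))) :=
      ((g.continuous.comp hφ).continuousAt).continuousWithinAt
    have hlim2 : Filter.Tendsto (fun s => c.symm (c (φ s) + v)) (𝓝[J ∩ E] t₀)
        (𝓝 (c.symm (c (φ t₀) + v))) := by
      have h1 : Filter.Tendsto (fun s : unitInterval => c (φ s) + v) (𝓝[J ∩ E] t₀)
          (𝓝 (c (φ t₀) + v)) := by
        apply Filter.Tendsto.add _ tendsto_const_nhds
        exact (((c.continuousAt hφc).comp hφ.continuousAt).continuousWithinAt :)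
      have h2 : Filter.Tendsto (⇑c.symm) (𝓝 (c (φ t₀) + v)) (𝓝 (c.symm (c (φ t₀) + v))) :=
        c.symm.continuousAt (by rwa [OpenPartialHomeomorph.symm_source])
      exact h2.comp h1
    have hlim1' : Filter.Tendsto (fun s => g (φ s)) (𝓝[J ∩ E] t₀)
        (𝓝 (c.symm (c (φ t₀) + v))) := by
      refine hlim2.congr' ?_
      filter_upwards [eventually_mem_nhdsWithin] with s hs
      exact (hagree s hs).symm
    have hkey : g (φ t₀) = c.symm (c (φ t₀) + v) := tendsto_nhds_unique hlim1 hlim1'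
    refine ⟨c, hc, hφc, hb, ?_, ?_⟩
    · rw [hkey]; exact c.map_target hmemtgt
    · rw [hkey]; exact c.right_inv hmemtgt
  have h0' : (0 : unitInterval) ∈ J := by
    obtain ⟨c, hc, h1, h2, h3, h4⟩ := h0
    exact ⟨c, hc, h1, h2, h3, h4⟩
  have huniv : J = Set.univ :=
    IsClopen.eq_univ ⟨closure_subset_iff_isClosed.1 hclosed, isOpen_iff_mem_nhds.2 hopen⟩
      ⟨0, h0'⟩
  intro t
  have : t ∈ J := huniv ▸ Set.mem_univ t
  exact this

end QCAux3
section QCAux4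
open Metric

variable {P : PointedTranslationSurface} {O : Set P.X}

/-- The orbit equivalence relation of `Γ = bcAutos P O`. -/
def relO (P : PointedTranslationSurface) (O : Set P.X) (z w : P.X) : Prop :=
  ∃ g ∈ bcAutos P O, g z = w

/-- All the hypotheses of the quotient construction, bundled. -/
structure Ctx (P : PointedTranslationSurface) (O : Set P.X) : Prop where
  planar : IsPlanar P
  disc : ∀ x : P.X, ¬ AccPt x (𝓟 O)
  bc : ∀ o ∈ O, ∃ h : P.X ≃ₜ P.X,
    IsTranslationIsoCharts P.toTranslationSurface P.toTranslationSurface h ∧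
    h o = P.basepoint
  one : Homeomorph.refl P.X ∈ bcAutos P O
  inv : ∀ h ∈ bcAutos P O, h.symm ∈ bcAutos P O
  mul : ∀ g ∈ bcAutos P O, ∀ h ∈ bcAutos P O, g.trans h ∈ bcAutos P O

namespace Ctx

lemma rel_equiv (hc : Ctx P O) : Equivalence (relO P O) := by
  refine ⟨fun z => ⟨Homeomorph.refl P.X, hc.one, rfl⟩, ?_, ?_⟩
  · rintro z w ⟨g, hg, rfl⟩
    exact ⟨g.symm, hc.inv g hg, g.symm_apply_apply z⟩
  · rintro z w u ⟨g, hg, rfl⟩ ⟨h, hh, rfl⟩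
    exact ⟨g.trans h, hc.mul g hg h hh, rfl⟩

lemma rigid (hc : Ctx P O) {g h : P.X ≃ₜ P.X} (hg : g ∈ bcAutos P O)
    (hh : h ∈ bcAutos P O) {x : P.X} (hx : g x = h x) : g = h := by
  have hk : g.trans h.symm ∈ bcAutos P O := hc.mul g hg h.symm (hc.inv h hh)
  have hfix : (g.trans h.symm) x = x := by
    show h.symm (g x) = x
    rw [hx, h.symm_apply_apply]
  have := free hk.1 hfix
  ext z
  have hz : h.symm (g z) = z := by
    have := congrArg (fun e : P.X ≃ₜ P.X => e z) this
    simpa using this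
  calc g z = h (h.symm (g z)) := (h.apply_symm_apply (g z)).symm
    _ = h z := by rw [hz]

lemma mem_O_iff (hc : Ctx P O) {z : P.X} :
    z ∈ O ↔ ∃ g ∈ bcAutos P O, g z = P.basepoint := by
  constructor
  · intro hz
    obtain ⟨h, hiso, hzb⟩ := hc.bc z hz
    exact ⟨h, ⟨hiso, z, hz, hzb⟩, hzb⟩
  · rintro ⟨g, hg, hgz⟩
    obtain ⟨-, o, ho, hgo⟩ := hg
    have : z = o := g.injective (hgz.trans hgo.symm)
    exact this ▸ ho

lemma orbit_bp (hc : Ctx P O) : {w | relO P O P.basepoint w} = O := by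
  ext w
  constructor
  · rintro ⟨g, hg, rfl⟩
    rw [hc.mem_O_iff]
    exact ⟨g.symm, hc.inv g hg, g.symm_apply_apply _⟩
  · intro hw
    obtain ⟨g, hg, hgw⟩ := (hc.mem_O_iff).1 hw
    refine ⟨g.symm, hc.inv g hg, ?_⟩
    rw [← hgw, g.symm_apply_apply]

lemma mem_bp_orbit (hc : Ctx P O) {g : P.X ≃ₜ P.X} (hg : g ∈ bcAutos P O) :
    g P.basepoint ∈ O := by
  rw [← hc.orbit_bp]
  exact ⟨g, hg, rfl⟩

/-- **Master lemma**: every `Γ`-orbit has no accumulation point. -/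
lemma orbit_disc (hc : Ctx P O) (x y : P.X) : ¬ AccPt y (𝓟 {w | relO P O x w}) := by
  intro hacc
  haveI : PathConnectedSpace P.X := by
    obtain ⟨e⟩ := hc.planar
    have := e.contractibleSpace
    infer_instance
  set γ : Path y P.basepoint := PathConnectedSpace.somePath y P.basepoint with hγ
  have hK : IsCompact (Set.range ⇑γ) := isCompact_range γ.continuous
  obtain ⟨r₀, hr₀, hrad⟩ := RAD P.toTranslationSurface hK
  have hrad' : ∀ t, ∃ c ∈ P.charts, γ t ∈ c.source ∧ ball (c (γ t)) r₀ ⊆ c.target :=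
    fun t => hrad (γ t) (Set.mem_range_self t)
  obtain ⟨d, hdm, hyd, hbd⟩ : ∃ c ∈ P.charts, y ∈ c.source ∧ ball (c y) r₀ ⊆ c.target := by
    have := hrad' 0
    rwa [γ.source] at this
  obtain ⟨c₁, hc₁m, hbpc₁, hbc₁⟩ : ∃ c ∈ P.charts, P.basepoint ∈ c.source ∧
      ball (c P.basepoint) r₀ ⊆ c.target := by
    have := hrad' 1
    rwa [γ.target] at this
  apply hc.disc P.basepoint
  rw [accPt_iff_nhds]
  intro N hN
  -- find ρ such that the ρ-ball around c₁ bp maps into N under c₁.symm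
  obtain ⟨ρ, hρ, hρN⟩ : ∃ ρ > 0, ball (c₁ P.basepoint) ρ ⊆ ⇑c₁.symm ⁻¹' N := by
    have hsymm : Filter.Tendsto (⇑c₁.symm) (𝓝 (c₁ P.basepoint)) (𝓝 P.basepoint) := by
      have h1 : ContinuousAt (⇑c₁.symm) (c₁ P.basepoint) := c₁.symm.continuousAt
        (by rw [OpenPartialHomeomorph.symm_source]; exact c₁.map_source hbpc₁)
      have h2 : Filter.Tendsto (⇑c₁.symm) (𝓝 (c₁ P.basepoint))
          (𝓝 (c₁.symm (c₁ P.basepoint))) := h1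
      rwa [c₁.left_inv hbpc₁] at h2
    exact Metric.mem_nhds_iff.1 (hsymm hN)
  set ε' : ℝ := min ρ r₀ / 8 with hε'
  have hε'pos : 0 < ε' := by
    have h1 : 0 < min ρ r₀ := lt_min hρ hr₀
    rw [hε']; linarith
  have hε'ρ : ε' ≤ ρ / 8 := by
    rw [hε']
    have := min_le_left ρ r₀; linarith
  have hε'r : ε' ≤ r₀ / 8 := by
    rw [hε']
    have := min_le_right ρ r₀; linarith
  -- pick two distinct orbit points near y
  have hW : d.source ∩ ⇑d ⁻¹' ball (d y) ε' ∈ 𝓝 y := by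
    refine (d.continuousOn.isOpen_inter_preimage d.open_source isOpen_ball).mem_nhds ?_
    exact ⟨hyd, by simp only [Set.mem_preimage, mem_ball, dist_self]; linarith⟩
  obtain ⟨p₁, ⟨hp₁W, hp₁O⟩, hp₁y⟩ := accPt_iff_nhds.1 hacc _ hW
  have hW' : (d.source ∩ ⇑d ⁻¹' ball (d y) ε') \ {p₁} ∈ 𝓝 y := by
    rw [_root_.mem_nhds_iff] at hW ⊢
    obtain ⟨V, hV, hVopen, hyV⟩ := hW
    exact ⟨V \ {p₁}, Set.diff_subset_diff_left hV, hVopen.sdiff isClosed_singleton,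
      ⟨hyV, by simp [Ne.symm hp₁y]⟩⟩
  obtain ⟨p₂, ⟨⟨hp₂W, hp₂p₁⟩, hp₂O⟩, hp₂y⟩ := accPt_iff_nhds.1 hacc _ hW'
  have hp₂p₁' : p₂ ≠ p₁ := by simpa using hp₂p₁
  obtain ⟨g₁, hg₁, hg₁x⟩ := hp₁O
  obtain ⟨g₂, hg₂, hg₂x⟩ := hp₂O
  set h : P.X ≃ₜ P.X := g₁.symm.trans g₂ with hh
  have hhΓ : h ∈ bcAutos P O := hc.mul g₁.symm (hc.inv g₁ hg₁) g₂ hg₂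
  have hhp₁ : h p₁ = p₂ := by
    rw [hh]
    show g₂ (g₁.symm p₁) = p₂
    rw [← hg₁x, g₁.symm_apply_apply, hg₂x]
  set v : Plane := d p₂ - d p₁ with hv
  have hd₁ : dist (d p₁) (d y) < ε' := mem_ball.1 hp₁W.2
  have hd₂ : dist (d p₂) (d y) < ε' := mem_ball.1 hp₂W.2
  have hvne : v ≠ 0 := by
    intro h0
    apply hp₂p₁'
    apply d.injOn hp₂W.1 hp₁W.1
    rw [hv] at h0
    exact sub_eq_zero.1 h0
  have hvnorm : ‖v‖ < 2 * ε' := by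
    rw [hv, ← dist_eq_norm]
    calc dist (d p₂) (d p₁) ≤ dist (d p₂) (d y) + dist (d y) (d p₁) := dist_triangle _ _ _
      _ < 2 * ε' := by rw [dist_comm (d y)]; linarith
  -- step 1: h displaces y by v in chart d
  have hstep1 : h y ∈ d.source ∧ d (h y) = d (h p₁) + (d y - d p₁) := by
    refine OT hhΓ.1 hdm hdm hp₁W.1 hyd (by rw [hhp₁]; exact hp₂W.1) ?_ ?_
    · intro t ht
      apply hbd
      apply ball_seg _ t ht
      have : ‖d y - d p₁‖ = dist (d p₁) (d y) := by
        rw [← dist_eq_norm, dist_comm]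
      rw [this]
      linarith
    · intro t ht
      apply hbd
      apply ball_seg _ t ht
      have h1 : ‖d y - d p₁‖ = dist (d p₁) (d y) := by rw [← dist_eq_norm, dist_comm]
      rw [hhp₁, h1]
      linarith
  have hstep1' : d (h y) = d y + v := by
    rw [hstep1.2, hhp₁, hv]; abel
  -- step 2: propagate along the path to the basepoint
  have hprop := path_prop hhΓ.1 γ.continuous hr₀ hrad'
    (v := v) (by linarith) ?h0 1
  case h0 =>
    refine ⟨d, hdm, ?_, ?_, ?_, ?_⟩ <;> rw [γ.source]
    · exact hyd
    · exact hbd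
    · exact hstep1.1
    · exact hstep1'
  obtain ⟨c', hc'm, hφ1, hb', hgm', heq'⟩ := hprop
  rw [γ.target] at hφ1 hb' hgm' heq'
  -- transfer to the fixed chart c₁ at the basepoint
  have hCI := CI (r := r₀) hc'm hc₁m hφ1 hbpc₁ hb' hbc₁ (by linarith) hgm' heq'
  -- conclude
  have hbpmem : c₁ P.basepoint + v ∈ ball (c₁ P.basepoint) ρ := by
    rw [mem_ball, dist_eq_norm]
    simpa using (by linarith : ‖v‖ < ρ)
  have hhbp : h P.basepoint = c₁.symm (c₁ P.basepoint + v) := by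
    rw [← hCI.2]
    exact (c₁.left_inv hCI.1).symm
  refine ⟨h P.basepoint, ⟨?_, hc.mem_bp_orbit hhΓ⟩, ?_⟩
  · rw [hhbp]
    exact hρN hbpmem
  · intro heq
    apply hvne
    have : c₁ P.basepoint = c₁ P.basepoint + v := by rw [← hCI.2, heq]
    have := left_eq_add.1 this
    exact this

end Ctx
end QCAux4
section QCAux5
open Metric

variable {P : PointedTranslationSurface} {O : Set P.X}

/-- Convergence read off in a chart. -/
lemma tend_chart {Y : Type} [TopologicalSpace Y] {c : OpenPartialHomeomorph Y Plane}
    {z : ℕ → Y} {x : Y} (hx : x ∈ c.source) (hmem : ∀ k, z k ∈ c.source)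
    (hdist : Filter.Tendsto (fun k => dist (c (z k)) (c x)) atTop (𝓝 0)) :
    Filter.Tendsto z atTop (𝓝 x) := by
  have hcz : Filter.Tendsto (fun k => c (z k)) atTop (𝓝 (c x)) :=
    tendsto_iff_dist_tendsto_zero.2 hdist
  have hsymm : Filter.Tendsto (⇑c.symm) (𝓝 (c x)) (𝓝 x) := by
    have h1 : ContinuousAt (⇑c.symm) (c x) := c.symm.continuousAt
      (by rw [OpenPartialHomeomorph.symm_source]; exact c.map_source hx)
    have h2 : Filter.Tendsto (⇑c.symm) (𝓝 (c x)) (𝓝 (c.symm (c x))) := h1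
    rwa [c.left_inv hx] at h2
  have := hsymm.comp hcz
  apply this.congr
  intro k
  exact c.left_inv (hmem k)

namespace Ctx

/-- **Limit lemma**: if `gₖ zₖ → y` with `zₖ → x` and `gₖ ∈ Γ`, then some `g₀ ∈ Γ`
with `g₀ x = y` occurs infinitely often. -/
lemma lim (hc : Ctx P O) {x y : P.X} {z : ℕ → P.X} {g : ℕ → P.X ≃ₜ P.X}
    (hgΓ : ∀ k, g k ∈ bcAutos P O) (hz : Filter.Tendsto z atTop (𝓝 x))
    (hgz : Filter.Tendsto (fun k => g k (z k)) atTop (𝓝 y)) :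
    ∃ g₀ ∈ bcAutos P O, g₀ x = y ∧ {k | g k = g₀}.Infinite := by
  by_cases hfin : ∃ g₀ : P.X ≃ₜ P.X, {k | g k = g₀}.Infinite
  · obtain ⟨g₀, hS⟩ := hfin
    have hmem : g₀ ∈ bcAutos P O := by
      obtain ⟨k, hk⟩ := hS.nonempty
      exact hk ▸ hgΓ k
    set F := atTop ⊓ 𝓟 {k | g k = g₀} with hF
    haveI hne : F.NeBot := by
      rw [hF, ← Nat.cofinite_eq_atTop]
      have h1 := Set.infinite_iff_frequently_cofinite.1 hS
      have h2 := Filter.frequently_iff_neBot.1 h1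
      simpa using h2
    have h1 : Filter.Tendsto z F (𝓝 x) := hz.mono_left inf_le_left
    have h2 : Filter.Tendsto (fun k => g₀ (z k)) F (𝓝 (g₀ x)) :=
      (g₀.continuous.tendsto x).comp h1
    have h3 : Filter.Tendsto (fun k => g k (z k)) F (𝓝 y) := hgz.mono_left inf_le_left
    have h4 : (fun k => g₀ (z k)) =ᶠ[F] fun k => g k (z k) := by
      have : ∀ᶠ k in F, g k = g₀ := by
        rw [hF]
        exact Filter.eventually_inf_principal.2 (Filter.Eventually.of_forall fun k hk => hk)
      filter_upwards [this] with k hk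
      rw [hk]
    have h5 : Filter.Tendsto (fun k => g k (z k)) F (𝓝 (g₀ x)) := h2.congr' h4
    exact ⟨g₀, hmem, tendsto_nhds_unique h5 h3, hS⟩
  · exfalso
    push_neg at hfin
    have hfin' : ∀ g₀ : P.X ≃ₜ P.X, {k | g k = g₀}.Finite := fun g₀ =>
      hfin g₀
    apply hc.orbit_disc x y
    obtain ⟨c, hcm, hxc, ε₀, hε₀, hbc⟩ := chart_ball P.toTranslationSurface x
    obtain ⟨d, hdm, hyd, δ₀, hδ₀, hbd⟩ := chart_ball P.toTranslationSurface y
    set m : ℝ := min (ε₀ / 2) (δ₀ / 4) with hm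
    have hmpos : 0 < m := lt_min (by linarith) (by linarith)
    have hmε : m ≤ ε₀ / 2 := min_le_left _ _
    have hmδ : m ≤ δ₀ / 4 := min_le_right _ _
    have hA : ∀ᶠ k in atTop, z k ∈ c.source ∧ dist (c (z k)) (c x) < m := by
      have hopen : IsOpen (c.source ∩ ⇑c ⁻¹' ball (c x) m) :=
        c.continuousOn.isOpen_inter_preimage c.open_source isOpen_ball
      have hmemx : x ∈ c.source ∩ ⇑c ⁻¹' ball (c x) m :=
        ⟨hxc, by simp only [Set.mem_preimage, mem_ball, dist_self]; linarith⟩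
      filter_upwards [hz.eventually (hopen.eventually_mem hmemx)] with k hk
      exact ⟨hk.1, mem_ball.1 hk.2⟩
    have hB : ∀ᶠ k in atTop, g k (z k) ∈ d.source ∧ dist (d (g k (z k))) (d y) < δ₀ / 4 := by
      have hopen : IsOpen (d.source ∩ ⇑d ⁻¹' ball (d y) (δ₀ / 4)) :=
        d.continuousOn.isOpen_inter_preimage d.open_source isOpen_ball
      have hmemy : y ∈ d.source ∩ ⇑d ⁻¹' ball (d y) (δ₀ / 4) :=
        ⟨hyd, by simp only [Set.mem_preimage, mem_ball, dist_self]; linarith⟩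
      filter_upwards [hgz.eventually (hopen.eventually_mem hmemy)] with k hk
      exact ⟨hk.1, mem_ball.1 hk.2⟩
    have hOT : ∀ᶠ k in atTop, (g k) x ∈ d.source ∧
        d ((g k) x) = d (g k (z k)) + (c x - c (z k)) := by
      filter_upwards [hA, hB] with k hk1 hk2
      refine OT (hgΓ k).1 hcm hdm hk1.1 hxc hk2.1 ?_ ?_
      · intro t ht
        apply hbc
        apply ball_seg _ t ht
        have hnorm : ‖c x - c (z k)‖ = dist (c (z k)) (c x) := by
          rw [← dist_eq_norm, dist_comm]
        rw [hnorm]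
        linarith [hk1.2]
      · intro t ht
        apply hbd
        apply ball_seg _ t ht
        have hnorm : ‖c x - c (z k)‖ = dist (c (z k)) (c x) := by
          rw [← dist_eq_norm, dist_comm]
        rw [hnorm]
        linarith [hk1.2, hk2.2]
    have ht1 : Filter.Tendsto (fun k => d (g k (z k)) + (c x - c (z k))) atTop (𝓝 (d y)) := by
      have l1 : Filter.Tendsto (fun k => d (g k (z k))) atTop (𝓝 (d y)) :=
        Filter.Tendsto.comp (d.continuousAt hyd) hgz
      have l0 : Filter.Tendsto (fun k => c (z k)) atTop (𝓝 (c x)) :=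
        Filter.Tendsto.comp (c.continuousAt hxc) hz
      have l2 : Filter.Tendsto (fun k => c x - c (z k)) atTop (𝓝 (0 : Plane)) := by
        have := (tendsto_const_nhds (x := c x) (f := atTop (α := ℕ))).sub l0
        simpa using this
      have := l1.add l2
      simpa using this
    have ht2 : Filter.Tendsto (fun k => (g k) x) atTop (𝓝 y) := by
      have hsymm : Filter.Tendsto (⇑d.symm) (𝓝 (d y)) (𝓝 y) := by
        have h1 : ContinuousAt (⇑d.symm) (d y) := d.symm.continuousAt
          (by rw [OpenPartialHomeomorph.symm_source]; exact d.map_source hyd)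
        have h2 : Filter.Tendsto (⇑d.symm) (𝓝 (d y)) (𝓝 (d.symm (d y))) := h1
        rwa [d.left_inv hyd] at h2
      refine (hsymm.comp ht1).congr' ?_
      filter_upwards [hOT] with k hk
      show d.symm (d (g k (z k)) + (c x - c (z k))) = (g k) x
      rw [← hk.2, d.left_inv hk.1]
    rw [accPt_iff_nhds]
    intro N hN
    have hev1 : ∀ᶠ k in atTop, (g k) x ∈ N := Filter.mem_map.1 (ht2 hN)
    have hfin2 : {k | (g k) x = y}.Finite := by
      by_cases hne2 : ∃ k₀, (g k₀) x = y
      · obtain ⟨k₀, hk₀⟩ := hne2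
        apply Set.Finite.subset (hfin' (g k₀))
        intro k hk
        have : (g k) x = (g k₀) x := by rw [hk, hk₀]
        exact hc.rigid (hgΓ k) (hgΓ k₀) this
      · push_neg at hne2
        have : {k | (g k) x = y} = ∅ := by
          ext k; simp [hne2 k]
        rw [this]; exact Set.finite_empty
    have hev2 : ∀ᶠ k in atTop, (g k) x ≠ y := by
      rw [← Nat.cofinite_eq_atTop]
      exact hfin2.eventually_cofinite_notMem
    obtain ⟨k, hk1, hk2⟩ := (hev1.and hev2).exists
    exact ⟨(g k) x, ⟨hk1, ⟨g k, hgΓ k, rfl⟩⟩, hk2⟩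

end Ctx
end QCAux5
section QCAux6
open Metric

variable {P : PointedTranslationSurface} {O : Set P.X}

namespace Ctx

private lemma aux_seq {c : OpenPartialHomeomorph P.X Plane} {x : P.X} (hxc : x ∈ c.source)
    {z : ℕ → P.X} (hmem : ∀ k, z k ∈ c.source)
    (hdist : ∀ k : ℕ, dist (c (z k)) (c x) < 1 / (k + 1)) :
    Filter.Tendsto z atTop (𝓝 x) := by
  apply tend_chart hxc hmem
  apply squeeze_zero (fun k => dist_nonneg) (fun k => le_of_lt (hdist k))
  exact tendsto_one_div_add_atTop_nhds_zero_nat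

/-- **Separating neighborhood**: around any point there is an open set moved off itself by
every nontrivial element of `Γ`. -/
lemma sep_cover (hc : Ctx P O) (x : P.X) :
    ∃ U : Set P.X, IsOpen U ∧ x ∈ U ∧
      ∀ g ∈ bcAutos P O, g ≠ Homeomorph.refl P.X → ∀ z ∈ U, g z ∉ U := by
  obtain ⟨c, hcm, hxc, ε₀, hε₀, hb⟩ := chart_ball P.toTranslationSurface x
  by_contra hcon
  push_neg at hcon
  set U : ℕ → Set P.X := fun k =>
    c.source ∩ ⇑c ⁻¹' ball (c x) (min ε₀ (1 / (k + 1))) with hU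
  have hUopen : ∀ k, IsOpen (U k) := fun k =>
    c.continuousOn.isOpen_inter_preimage c.open_source isOpen_ball
  have hxU : ∀ k, x ∈ U k := fun k => ⟨hxc, by
    simp only [Set.mem_preimage, mem_ball, dist_self]
    have : (0:ℝ) < 1 / (k + 1) := by positivity
    exact lt_min hε₀ this⟩
  have hex : ∀ k : ℕ, ∃ g ∈ bcAutos P O, g ≠ Homeomorph.refl P.X ∧
      ∃ z ∈ U k, g z ∈ U k := fun k => hcon (U k) (hUopen k) (hxU k)
  choose g hgΓ hgne z hzU hgzU using hex
  have hz : Filter.Tendsto z atTop (𝓝 x) := by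
    refine aux_seq hxc (fun k => (hzU k).1) (fun k => ?_)
    exact lt_of_lt_of_le (mem_ball.1 (hzU k).2) (min_le_right _ _)
  have hgz : Filter.Tendsto (fun k => g k (z k)) atTop (𝓝 x) := by
    refine aux_seq hxc (fun k => (hgzU k).1) (fun k => ?_)
    exact lt_of_lt_of_le (mem_ball.1 (hgzU k).2) (min_le_right _ _)
  obtain ⟨g₀, hg₀Γ, hg₀x, hinf⟩ := hc.lim hgΓ hz hgz
  have hg₀refl : g₀ = Homeomorph.refl P.X := free hg₀Γ.1 hg₀x
  obtain ⟨k, hk⟩ := hinf.nonempty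
  exact hgne k (hk.trans hg₀refl)

/-- **Separation of distinct orbits** by saturated neighborhoods. -/
lemma sep_t2 (hc : Ctx P O) {x y : P.X} (hxy : ¬ relO P O x y) :
    ∃ U V : Set P.X, IsOpen U ∧ IsOpen V ∧ x ∈ U ∧ y ∈ V ∧
      ∀ g ∈ bcAutos P O, ∀ z ∈ U, g z ∉ V := by
  obtain ⟨c, hcm, hxc, ε₀, hε₀, hbc⟩ := chart_ball P.toTranslationSurface x
  obtain ⟨d, hdm, hyd, δ₀, hδ₀, hbd⟩ := chart_ball P.toTranslationSurface y
  by_contra hcon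
  push_neg at hcon
  set U : ℕ → Set P.X := fun k =>
    c.source ∩ ⇑c ⁻¹' ball (c x) (min ε₀ (1 / (k + 1))) with hU
  set V : ℕ → Set P.X := fun k =>
    d.source ∩ ⇑d ⁻¹' ball (d y) (min δ₀ (1 / (k + 1))) with hV
  have hUopen : ∀ k, IsOpen (U k) := fun k =>
    c.continuousOn.isOpen_inter_preimage c.open_source isOpen_ball
  have hVopen : ∀ k, IsOpen (V k) := fun k =>
    d.continuousOn.isOpen_inter_preimage d.open_source isOpen_ball
  have hxU : ∀ k, x ∈ U k := fun k => ⟨hxc, by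
    simp only [Set.mem_preimage, mem_ball, dist_self]
    have : (0:ℝ) < 1 / (k + 1) := by positivity
    exact lt_min hε₀ this⟩
  have hyV : ∀ k, y ∈ V k := fun k => ⟨hyd, by
    simp only [Set.mem_preimage, mem_ball, dist_self]
    have : (0:ℝ) < 1 / (k + 1) := by positivity
    exact lt_min hδ₀ this⟩
  have hex : ∀ k : ℕ, ∃ g ∈ bcAutos P O, ∃ z ∈ U k, g z ∈ V k := fun k =>
    hcon (U k) (V k) (hUopen k) (hVopen k) (hxU k) (hyV k)
  choose g hgΓ z hzU hgzV using hex
  have hz : Filter.Tendsto z atTop (𝓝 x) := by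
    refine aux_seq hxc (fun k => (hzU k).1) (fun k => ?_)
    exact lt_of_lt_of_le (mem_ball.1 (hzU k).2) (min_le_right _ _)
  have hgz : Filter.Tendsto (fun k => g k (z k)) atTop (𝓝 y) := by
    refine aux_seq hyd (fun k => (hgzV k).1) (fun k => ?_)
    exact lt_of_lt_of_le (mem_ball.1 (hgzV k).2) (min_le_right _ _)
  obtain ⟨g₀, hg₀Γ, hg₀x, -⟩ := hc.lim hgΓ hz hgz
  exact hxy ⟨g₀, hg₀Γ, hg₀x⟩

/-- Uniqueness of the sheet: if `g z` and `g' z` both lie in a `Γ`-separated set `U`,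
then `g = g'`. -/
lemma sheet_uniq (hc : Ctx P O) {U : Set P.X}
    (hsep : ∀ g ∈ bcAutos P O, g ≠ Homeomorph.refl P.X → ∀ z ∈ U, g z ∉ U)
    {g g' : P.X ≃ₜ P.X} (hg : g ∈ bcAutos P O) (hg' : g' ∈ bcAutos P O)
    {z : P.X} (hgz : g z ∈ U) (hg'z : g' z ∈ U) : g = g' := by
  set h : P.X ≃ₜ P.X := g.symm.trans g' with hh
  have hhΓ : h ∈ bcAutos P O := hc.mul g.symm (hc.inv g hg) g' hg'
  have hhgz : h (g z) = g' z := by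
    show g' (g.symm (g z)) = g' z
    rw [g.symm_apply_apply]
  by_cases hrefl : h = Homeomorph.refl P.X
  · -- then g z = g' z hence g = g'
    have : g z = g' z := by
      rw [← hhgz, hrefl]; rfl
    exact hc.rigid hg hg' this
  · exfalso
    exact hsep h hhΓ hrefl (g z) hgz (hhgz ▸ hg'z)

end Ctx
end QCAux6
section QCAux7
open Metric

variable {P : PointedTranslationSurface} {O : Set P.X}

/-- The quotient space. -/
def QSp (P : PointedTranslationSurface) (O : Set P.X) : Type := Quot (relO P O)

instance : TopologicalSpace (QSp P O) := instTopologicalSpaceQuot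

/-- The quotient map. -/
def qmap (P : PointedTranslationSurface) (O : Set P.X) : P.X → QSp P O :=
  Quot.mk (relO P O)

lemma qmap_continuous : Continuous (qmap P O) := continuous_quot_mk

lemma qmap_surjective : Function.Surjective (qmap P O) := Quot.mk_surjective

namespace Ctx

lemma qmap_eq_iff (hc : Ctx P O) {z w : P.X} :
    qmap P O z = qmap P O w ↔ relO P O z w := by
  refine (Quot.eq (r := relO P O)).trans ?_
  exact Equivalence.eqvGen_iff hc.rel_equiv

lemma qmap_sat (hc : Ctx P O) (A : Set P.X) :
    qmap P O ⁻¹' (qmap P O '' A) = ⋃ g ∈ bcAutos P O, ⇑g ⁻¹' A := by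
  ext z
  simp only [Set.mem_preimage, Set.mem_image, Set.mem_iUnion]
  constructor
  · rintro ⟨w, hwA, hw⟩
    obtain ⟨g, hg, hgw⟩ := hc.qmap_eq_iff.1 hw.symm  -- relO z w... careful direction
    refine ⟨g, hg, ?_⟩
    show g z ∈ A
    rw [hgw]; exact hwA
  · rintro ⟨g, hg, hgz⟩
    exact ⟨g z, hgz, (hc.qmap_eq_iff.2 ⟨g, hg, rfl⟩).symm⟩

lemma qmap_isOpenMap (hc : Ctx P O) : IsOpenMap (qmap P O) := by
  intro A hA
  refine (isQuotientMap_quot_mk (r := relO P O)).isOpen_preimage.1 ?_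
  show IsOpen (qmap P O ⁻¹' (qmap P O '' A))
  rw [hc.qmap_sat]
  exact isOpen_biUnion fun g _ => hA.preimage g.continuous

lemma qsp_t2 (hc : Ctx P O) : T2Space (QSp P O) := by
  constructor
  intro a b hab
  obtain ⟨x, rfl⟩ := qmap_surjective a
  obtain ⟨y, rfl⟩ := qmap_surjective b
  have hxy : ¬ relO P O x y := fun h => hab (hc.qmap_eq_iff.2 h)
  obtain ⟨U, V, hUopen, hVopen, hxU, hyV, hsep⟩ := hc.sep_t2 hxy
  refine ⟨qmap P O '' U, qmap P O '' V, hc.qmap_isOpenMap U hUopen,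
    hc.qmap_isOpenMap V hVopen, ⟨x, hxU, rfl⟩, ⟨y, hyV, rfl⟩, ?_⟩
  rw [Set.disjoint_left]
  rintro s ⟨u, huU, rfl⟩ ⟨v, hvV, hv⟩
  obtain ⟨g, hg, hgv⟩ := hc.qmap_eq_iff.1 hv  -- relO v u
  -- we need some g with g u = v
  have : relO P O u v := hc.rel_equiv.symm ⟨g, hg, hgv⟩
  obtain ⟨g', hg', hg'u⟩ := this
  exact hsep g' hg' u huU (hg'u ▸ hvV)

lemma qsp_conn (hc : Ctx P O) : ConnectedSpace (QSp P O) := by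
  have h1 : IsPreconnected (Set.univ : Set (QSp P O)) := by
    have : (Set.univ : Set (QSp P O)) = qmap P O '' Set.univ := by
      rw [Set.image_univ, Set.range_eq_univ.2 qmap_surjective]
    rw [this]
    exact isPreconnected_univ.image _ (qmap_continuous.continuousOn)
  have h2 : Nonempty (QSp P O) := ⟨qmap P O P.basepoint⟩
  exact { toPreconnectedSpace := ⟨h1⟩, toNonempty := h2 }

/-- Injectivity of the quotient map on a `Γ`-separated set. -/
lemma qmap_injOn (hc : Ctx P O) {U : Set P.X}
    (hsep : ∀ g ∈ bcAutos P O, g ≠ Homeomorph.refl P.X → ∀ z ∈ U, g z ∉ U) :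
    Set.InjOn (qmap P O) U := by
  intro u hu u' hu' heq
  obtain ⟨g, hg, hgu⟩ := hc.qmap_eq_iff.1 heq
  by_cases hrefl : g = Homeomorph.refl P.X
  · rw [hrefl] at hgu; exact hgu
  · exact absurd (hgu ▸ hu') (hsep g hg hrefl u hu)

end Ctx
end QCAux7
section QCAux8
open Metric

variable {P : PointedTranslationSurface} {O : Set P.X}

/-- A choice of local section of the quotient map over `qmap '' U`, with junk value `x`
elsewhere. -/
noncomputable def qsec (x : P.X) (U : Set P.X) (s : QSp P O) : P.X :=
  open Classical in
  if h : ∃ u, u ∈ U ∧ qmap P O u = s then h.choose else x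

lemma qsec_spec {x : P.X} {U : Set P.X} {s : QSp P O} (h : s ∈ qmap P O '' U) :
    qsec x U s ∈ U ∧ qmap P O (qsec x U s) = s := by
  obtain ⟨u, hu, rfl⟩ := h
  have hex : ∃ u', u' ∈ U ∧ qmap P O u' = qmap P O u := ⟨u, hu, rfl⟩
  rw [qsec]
  rw [dif_pos hex]
  exact ⟨hex.choose_spec.1, hex.choose_spec.2⟩

namespace Ctx

lemma qsec_qmap (hc : Ctx P O) {U : Set P.X}
    (hsep : ∀ g ∈ bcAutos P O, g ≠ Homeomorph.refl P.X → ∀ z ∈ U, g z ∉ U)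
    {x u : P.X} (hu : u ∈ U) : qsec x U (qmap P O u) = u := by
  have hmem : qmap P O u ∈ qmap P O '' U := ⟨u, hu, rfl⟩
  obtain ⟨h1, h2⟩ := qsec_spec (x := x) hmem
  exact hc.qmap_injOn hsep h1 hu h2

lemma qsec_continuousOn (hc : Ctx P O) {U : Set P.X} (hUopen : IsOpen U)
    (hsep : ∀ g ∈ bcAutos P O, g ≠ Homeomorph.refl P.X → ∀ z ∈ U, g z ∉ U)
    (x : P.X) : ContinuousOn (qsec x U) (qmap P O '' U) := by
  rw [_root_.continuousOn_iff]
  intro s hs t htopen hst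
  refine ⟨qmap P O '' (U ∩ t), hc.qmap_isOpenMap _ (hUopen.inter htopen), ?_, ?_⟩
  · obtain ⟨h1, h2⟩ := qsec_spec (x := x) hs
    exact ⟨qsec x U s, ⟨h1, hst⟩, h2⟩
  · rintro s' ⟨⟨w, ⟨hwU, hwt⟩, rfl⟩, -⟩
    rw [Set.mem_preimage, hc.qsec_qmap hsep hwU]
    exact hwt

/-- Fibers of the quotient map are discrete. -/
lemma fiber_discrete (hc : Ctx P O) (b : QSp P O) :
    DiscreteTopology ↥(qmap P O ⁻¹' {b}) := by
  rw [discreteTopology_iff_isOpen_singleton]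
  rintro ⟨p, hp⟩
  have hp' : qmap P O p = b := hp
  have hacc := hc.orbit_disc p p
  rw [accPt_iff_nhds] at hacc
  push_neg at hacc
  obtain ⟨N, hN, hNp⟩ := hacc
  have hsub : qmap P O ⁻¹' {b} ⊆ {w | relO P O p w} := by
    intro z hz
    have : qmap P O z = qmap P O p := by rw [hp']; exact hz
    exact hc.rel_equiv.symm (hc.qmap_eq_iff.1 this)
  have : {(⟨p, hp⟩ : ↥(qmap P O ⁻¹' {b}))} =
      Subtype.val ⁻¹' (interior N) := by
    ext q
    simp only [Set.mem_singleton_iff, Set.mem_preimage]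
    constructor
    · rintro rfl
      exact mem_interior_iff_mem_nhds.2 hN
    · intro hq
      apply Subtype.ext
      exact hNp q.val ⟨interior_subset hq, hsub q.2⟩
  rw [this]
  exact isOpen_interior.preimage continuous_subtype_val

end Ctx
end QCAux8
section QCAux9
open Metric

variable {P : PointedTranslationSurface} {O : Set P.X}

namespace Ctx

lemma evenly (hc : Ctx P O) (b : QSp P O) :
    IsEvenlyCovered (qmap P O) b ↥(qmap P O ⁻¹' {b}) := by
  classical
  obtain ⟨x, rfl⟩ := qmap_surjective b
  obtain ⟨U, hUopen, hxU, hsep⟩ := hc.sep_cover x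
  haveI hdisc := hc.fiber_discrete (qmap P O x)
  suffices h : ∃ t : Bundle.Trivialization ↥(qmap P O ⁻¹' {qmap P O x}) (qmap P O), qmap P O x ∈ t.baseSet from
    let ⟨_, ht⟩ := h; IsEvenlyCovered.of_trivialization ht
  set q : P.X → QSp P O := qmap P O with hq
  have hgE : ∀ e : ↥(q ⁻¹' {q x}), ∃ g, g ∈ bcAutos P O ∧ g x = (e : P.X) := by
    intro e
    have he : q (e : P.X) = q x := e.2
    exact hc.rel_equiv.symm (hc.qmap_eq_iff.1 he)
  choose gE hgEΓ hgEx using hgE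
  set sec : QSp P O → P.X := qsec x U with hsec
  set fibval : P.X → P.X := fun z =>
    if h : ∃ g, g ∈ bcAutos P O ∧ g z ∈ U then h.choose.symm x else x with hfibval
  have hfibval_mem : ∀ z, q (fibval z) = q x := by
    intro z
    by_cases h : ∃ g, g ∈ bcAutos P O ∧ g z ∈ U
    · have : fibval z = h.choose.symm x := by rw [hfibval]; exact dif_pos h
      rw [this]
      exact hc.qmap_eq_iff.2 ⟨h.choose, h.choose_spec.1, h.choose.apply_symm_apply x⟩
    · have : fibval z = x := by rw [hfibval]; exact dif_neg h
      rw [this]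
  set fib : P.X → ↥(q ⁻¹' {q x}) := fun z => ⟨fibval z, hfibval_mem z⟩ with hfib
  have hfibval_eq : ∀ (z : P.X) (g : P.X ≃ₜ P.X), g ∈ bcAutos P O → g z ∈ U →
      fibval z = g.symm x := by
    intro z g hg hgz
    have h : ∃ g, g ∈ bcAutos P O ∧ g z ∈ U := ⟨g, hg, hgz⟩
    have h1 : fibval z = h.choose.symm x := by rw [hfibval]; exact dif_pos h
    rw [h1, hc.sheet_uniq hsep h.choose_spec.1 hg h.choose_spec.2 hgz]
  have hsrc : ∀ z : P.X, z ∈ q ⁻¹' (q '' U) ↔ ∃ g, g ∈ bcAutos P O ∧ g z ∈ U := by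
    intro z
    constructor
    · rintro ⟨u, hu, huz⟩
      obtain ⟨g, hg, hgz⟩ := hc.qmap_eq_iff.1 huz.symm
      exact ⟨g, hg, hgz ▸ hu⟩
    · rintro ⟨g, hg, hgz⟩
      exact ⟨g z, hgz, (hc.qmap_eq_iff.2 ⟨g, hg, rfl⟩).symm⟩
  have hqinv : ∀ (e : ↥(q ⁻¹' {q x})) (w : P.X), q (gE e w) = q w := by
    intro e w
    exact hc.qmap_eq_iff.2 ⟨(gE e).symm, hc.inv _ (hgEΓ e), (gE e).symm_apply_apply _⟩
  refine ⟨⟨⟨⟨⟨fun z => (q z, fib z), fun se => gE se.2 (sec se.1),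
    q ⁻¹' (q '' U), (q '' U) ×ˢ Set.univ, ?_, ?_, ?_, ?_⟩, ?_, ?_⟩, ?_, ?_⟩,
    q '' U, hc.qmap_isOpenMap U hUopen, rfl, rfl, fun p hp => rfl⟩, ⟨x, hxU, rfl⟩⟩
  -- map_source
  · intro z hz
    exact ⟨hz, Set.mem_univ _⟩
  -- map_target
  · rintro ⟨s, e⟩ ⟨hs, -⟩
    show gE e (sec s) ∈ q ⁻¹' (q '' U)
    rw [Set.mem_preimage]
    have h1 : q (gE e (sec s)) = q (sec s) := hqinv e (sec s)
    have h2 : q (sec s) = s := (qsec_spec hs).2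
    rw [h1, h2]
    exact hs
  -- left_inv
  · intro z hz
    obtain ⟨g, hg, hgz⟩ := (hsrc z).1 hz
    have h1 : q z = q (g z) := hc.qmap_eq_iff.2 ⟨g, hg, rfl⟩
    have h2 : sec (q z) = g z := by
      rw [hsec, h1]
      exact hc.qsec_qmap hsep hgz
    have h4 : gE (fib z) = g.symm := by
      apply hc.rigid (hgEΓ _) (hc.inv g hg)
      rw [hgEx (fib z)]
      show fibval z = g.symm x
      exact hfibval_eq z g hg hgz
    show gE (fib z) (sec (q z)) = z
    rw [h2, h4, g.symm_apply_apply]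
  -- right_inv
  · rintro ⟨s, e⟩ ⟨hs, -⟩
    have hsecU : sec s ∈ U := (qsec_spec hs).1
    have hgz' : (gE e).symm (gE e (sec s)) ∈ U := by
      rw [(gE e).symm_apply_apply]
      exact hsecU
    have hq' : q (gE e (sec s)) = s := by
      have h1 : q (gE e (sec s)) = q (sec s) := hqinv e (sec s)
      have h2 : q (sec s) = s := (qsec_spec hs).2
      rw [h1, h2]
    have h5 : fibval (gE e (sec s)) = (e : P.X) := by
      rw [hfibval_eq _ (gE e).symm (hc.inv _ (hgEΓ e)) hgz', Homeomorph.symm_symm,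
        hgEx]
    show (q (gE e (sec s)), fib (gE e (sec s))) = (s, e)
    rw [Prod.ext_iff]
    exact ⟨hq', Subtype.ext h5⟩
  pick_goal 4
  pick_goal 4
  -- open_source
  · exact (hc.qmap_isOpenMap U hUopen).preimage qmap_continuous
  -- open_target
  · exact (hc.qmap_isOpenMap U hUopen).prod isOpen_univ
  -- continuousOn_toFun
  · intro z₀ hz₀
    refine ContinuousWithinAt.prodMk qmap_continuous.continuousWithinAt ?_
    apply ContinuousAt.continuousWithinAt
    obtain ⟨g, hg, hgz₀⟩ := (hsrc z₀).1 hz₀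
    have hev : (fun z => fib z) =ᶠ[𝓝 z₀] fun _ => fib z₀ := by
      have hWopen : IsOpen (⇑g ⁻¹' U) := hUopen.preimage g.continuous
      filter_upwards [hWopen.eventually_mem hgz₀] with z hz
      apply Subtype.ext
      show fibval z = fibval z₀
      rw [hfibval_eq z g hg hz, hfibval_eq z₀ g hg hgz₀]
    exact hev.continuousAt
  -- continuousOn_invFun
  · rintro ⟨s₀, e₀⟩ ⟨hs₀, -⟩
    have hbase : ContinuousWithinAt (fun se : QSp P O × ↥(q ⁻¹' {q x}) => gE e₀ (sec se.1))
        ((q '' U) ×ˢ Set.univ) (s₀, e₀) := by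
      have h1 : ContinuousWithinAt sec (q '' U) s₀ :=
        (hc.qsec_continuousOn hUopen hsep x) s₀ hs₀
      have h2 : ContinuousWithinAt (fun se : QSp P O × ↥(q ⁻¹' {q x}) => sec se.1)
          ((q '' U) ×ˢ Set.univ) (s₀, e₀) := by
        refine ContinuousWithinAt.comp (t := q '' U) (f := Prod.fst) (x := (s₀, e₀)) h1
          continuous_fst.continuousWithinAt ?_
        rintro ⟨s, e⟩ ⟨hs, -⟩
        exact hs
      exact (gE e₀).continuous.continuousAt.comp_continuousWithinAt h2
    refine hbase.congr_of_eventuallyEq ?_ rfl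
    have hA : {se : QSp P O × ↥(q ⁻¹' {q x}) | se.2 = e₀} ∈ 𝓝 (s₀, e₀) := by
      have : IsOpen {se : QSp P O × ↥(q ⁻¹' {q x}) | se.2 = e₀} := by
        have : {se : QSp P O × ↥(q ⁻¹' {q x}) | se.2 = e₀} = Prod.snd ⁻¹' {e₀} := rfl
        rw [this]
        exact (isOpen_discrete _).preimage continuous_snd
      exact this.mem_nhds rfl
    filter_upwards [mem_nhdsWithin_of_mem_nhds hA] with se hse
    show gE se.2 (sec se.1) = gE e₀ (sec se.1)
    rw [hse]

lemma qmap_covering (hc : Ctx P O) : IsCoveringMap (qmap P O) := fun b => hc.evenly b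

end Ctx
end QCAux9
section QCAux10
open Metric

variable {P : PointedTranslationSurface} {O : Set P.X}

/-- Restriction of a chart to an open set remains a chart. -/
lemma restr_mem_charts (T : TranslationSurface) {c : OpenPartialHomeomorph T.X Plane}
    (hc : c ∈ T.charts) (U : Set T.X) : c.restr U ∈ T.charts := by
  apply T.maximal
  intro c' hc'
  constructor
  · intro y hy
    have hy' : y ∈ c.source ∩ c'.source := by
      refine ⟨?_, hy.2⟩
      have := hy.1
      rw [OpenPartialHomeomorph.restr_source] at this
      exact this.1
    obtain ⟨v, hv⟩ := T.compat c hc c' hc' y hy'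
    refine ⟨v, ?_⟩
    filter_upwards [hv] with z hz hmem
    have : z ∈ c.source ∩ c'.source := by
      refine ⟨?_, hmem.2⟩
      have := hmem.1
      rw [OpenPartialHomeomorph.restr_source] at this
      exact this.1
    exact hz this
  · intro y hy
    have hy' : y ∈ c'.source ∩ c.source := by
      refine ⟨hy.1, ?_⟩
      have := hy.2
      rw [OpenPartialHomeomorph.restr_source] at this
      exact this.1
    obtain ⟨v, hv⟩ := T.compat c' hc' c hc y hy'
    refine ⟨v, ?_⟩
    filter_upwards [hv] with z hz hmem
    have hmem' : z ∈ c'.source ∩ c.source := by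
      refine ⟨hmem.1, ?_⟩
      have := hmem.2
      rw [OpenPartialHomeomorph.restr_source] at this
      exact this.1
    exact hz hmem'

/-- Compatibility propagates through an atlas. -/
lemma engine_compat {Y : Type} [TopologicalSpace Y] {A : Set (OpenPartialHomeomorph Y Plane)}
    (hcover : ∀ y : Y, ∃ a ∈ A, y ∈ a.source)
    {c₁ c₂ : OpenPartialHomeomorph Y Plane}
    (h₁ : ∀ a ∈ A, TranslationCompatible c₁ a ∧ TranslationCompatible a c₁)
    (h₂ : ∀ a ∈ A, TranslationCompatible c₂ a ∧ TranslationCompatible a c₂) :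
    TranslationCompatible c₁ c₂ := by
  rintro y ⟨hy₁, hy₂⟩
  obtain ⟨a, haA, hya⟩ := hcover y
  obtain ⟨v₁, hv₁⟩ := (h₁ a haA).1 y ⟨hy₁, hya⟩
  obtain ⟨v₂, hv₂⟩ := (h₂ a haA).2 y ⟨hya, hy₂⟩
  refine ⟨v₁ + v₂, ?_⟩
  filter_upwards [hv₁, hv₂, a.open_source.eventually_mem hya] with z hz₁ hz₂ hza hmem
  have ha := hz₁ ⟨hmem.1, hza⟩
  have hb := hz₂ ⟨hza, hmem.2⟩
  rw [hb, ha, add_assoc]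

namespace Ctx

/-- Existence of quotient charts. -/
lemma chart_exists (hc : Ctx P O) (x : P.X) :
    ∃ (ch : OpenPartialHomeomorph (QSp P O) Plane) (c : OpenPartialHomeomorph P.X Plane)
      (U : Set P.X), c ∈ P.charts ∧ IsOpen U ∧ x ∈ U ∧ U ⊆ c.source ∧
      (∀ g ∈ bcAutos P O, g ≠ Homeomorph.refl P.X → ∀ z ∈ U, g z ∉ U) ∧
      ch.source = qmap P O '' U ∧ (∀ u ∈ U, ch (qmap P O u) = c u) := by
  obtain ⟨c, hcm, hxc, -⟩ := chart_ball P.toTranslationSurface x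
  obtain ⟨U₀, hU₀open, hxU₀, hsep₀⟩ := hc.sep_cover x
  set U : Set P.X := U₀ ∩ c.source with hU
  have hUopen : IsOpen U := hU₀open.inter c.open_source
  have hxU : x ∈ U := ⟨hxU₀, hxc⟩
  have hUc : U ⊆ c.source := Set.inter_subset_right
  have hsep : ∀ g ∈ bcAutos P O, g ≠ Homeomorph.refl P.X → ∀ z ∈ U, g z ∉ U :=
    fun g hg hgr z hz hgz => hsep₀ g hg hgr z hz.1 hgz.1
  have hsecU : ∀ s ∈ qmap P O '' U, qsec x U s ∈ U ∧ qmap P O (qsec x U s) = s :=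
    fun s hs => qsec_spec hs
  have htgt_open : IsOpen (c.target ∩ ⇑c.symm ⁻¹' U) :=
    c.continuousOn_symm.isOpen_inter_preimage c.open_target hUopen
  have hmemtgt : ∀ u ∈ U, c u ∈ c.target ∩ ⇑c.symm ⁻¹' U := by
    intro u hu
    refine ⟨c.map_source (hUc hu), ?_⟩
    rw [Set.mem_preimage, c.left_inv (hUc hu)]
    exact hu
  refine ⟨⟨⟨⟨fun s => c (qsec x U s), fun p => qmap P O (c.symm p),
    qmap P O '' U, c.target ∩ ⇑c.symm ⁻¹' U, ?_, ?_, ?_, ?_⟩, ?_, ?_⟩, ?_, ?_⟩,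
    c, U, hcm, hUopen, hxU, hUc, hsep, rfl, ?_⟩
  -- map_source
  · intro s hs
    exact hmemtgt _ (hsecU s hs).1
  -- map_target
  · rintro p ⟨hp₁, hp₂⟩
    exact ⟨c.symm p, hp₂, rfl⟩
  -- left_inv
  · intro s hs
    show qmap P O (c.symm (c (qsec x U s))) = s
    rw [c.left_inv (hUc (hsecU s hs).1), (hsecU s hs).2]
  -- right_inv
  · rintro p ⟨hp₁, hp₂⟩
    show c (qsec x U (qmap P O (c.symm p))) = p
    rw [hc.qsec_qmap hsep hp₂, c.right_inv hp₁]
  pick_goal 4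
  pick_goal 4
  -- open_source
  · exact hc.qmap_isOpenMap U hUopen
  -- open_target
  · exact htgt_open
  -- continuousOn_toFun
  · show ContinuousOn (fun s => c (qsec x U s)) (qmap P O '' U)
    refine ContinuousOn.comp c.continuousOn (hc.qsec_continuousOn hUopen hsep x) ?_
    intro s hs
    exact hUc (hsecU s hs).1
  -- continuousOn_invFun
  · show ContinuousOn (fun p => qmap P O (c.symm p)) (c.target ∩ ⇑c.symm ⁻¹' U)
    exact qmap_continuous.comp_continuousOn
      (c.continuousOn_symm.mono Set.inter_subset_left)
  -- chart values
  · intro u hu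
    show c (qsec x U (qmap P O u)) = c u
    rw [hc.qsec_qmap hsep hu]

/-- The atlas on the quotient. -/
def qAtlas (P : PointedTranslationSurface) (O : Set P.X) :
    Set (OpenPartialHomeomorph (QSp P O) Plane) :=
  {ch | ∃ (c : OpenPartialHomeomorph P.X Plane) (U : Set P.X),
    c ∈ P.charts ∧ IsOpen U ∧ U ⊆ c.source ∧
    (∀ g ∈ bcAutos P O, g ≠ Homeomorph.refl P.X → ∀ z ∈ U, g z ∉ U) ∧
    ch.source = qmap P O '' U ∧ (∀ u ∈ U, ch (qmap P O u) = c u)}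

lemma qAtlas_cover (hc : Ctx P O) (s : QSp P O) :
    ∃ ch ∈ qAtlas P O, s ∈ ch.source := by
  obtain ⟨x, rfl⟩ := qmap_surjective s
  obtain ⟨ch, c, U, hcm, hUopen, hxU, hUc, hsep, hsrc, hval⟩ := hc.chart_exists x
  exact ⟨ch, ⟨c, U, hcm, hUopen, hUc, hsep, hsrc, hval⟩, hsrc ▸ ⟨x, hxU, rfl⟩⟩

/-- Pairwise compatibility of quotient charts. -/
lemma qAtlas_compat (hc : Ctx P O) :
    ∀ ch₁ ∈ qAtlas P O, ∀ ch₂ ∈ qAtlas P O, TranslationCompatible ch₁ ch₂ := by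
  rintro ch₁ ⟨c₁, U₁, hc₁m, hU₁open, hU₁c, hsep₁, hsrc₁, hval₁⟩
    ch₂ ⟨c₂, U₂, hc₂m, hU₂open, hU₂c, hsep₂, hsrc₂, hval₂⟩
  rintro s ⟨hs₁, hs₂⟩
  rw [hsrc₁] at hs₁
  rw [hsrc₂] at hs₂
  obtain ⟨u₁, hu₁, hqu₁⟩ := hs₁
  obtain ⟨u₂, hu₂, hqu₂⟩ := hs₂
  obtain ⟨g, hg, hgu₁⟩ := hc.qmap_eq_iff.1 (hqu₁.trans hqu₂.symm)
  set e := pushforward g.symm c₂ with he_def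
  have hem : e ∈ P.charts := pf_mem_charts (hc.inv g hg).1 hc₂m
  have he_app : ∀ z, e z = c₂ (g z) := by
    intro z
    rw [he_def, pf_apply, Homeomorph.symm_symm]
  have he_src : ∀ z, z ∈ e.source ↔ g z ∈ c₂.source := by
    intro z
    rw [he_def, pf_source, Homeomorph.symm_symm]
    rfl
  have hu₁c : u₁ ∈ c₁.source := hU₁c hu₁
  have hu₁e : u₁ ∈ e.source := (he_src u₁).2 (by rw [hgu₁]; exact hU₂c hu₂)
  have hev := compat_eval P.toTranslationSurface hc₁m hem hu₁c hu₁e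
  have hgU₂ : ∀ᶠ z in 𝓝 u₁, g z ∈ U₂ := by
    have : IsOpen (⇑g ⁻¹' U₂) := hU₂open.preimage g.continuous
    exact this.eventually_mem (by rw [Set.mem_preimage, hgu₁]; exact hu₂)
  have hU₁ev : ∀ᶠ z in 𝓝 u₁, z ∈ U₁ := hU₁open.eventually_mem hu₁
  obtain ⟨W, hWsub, hWopen, hu₁W⟩ := _root_.mem_nhds_iff.1 ((hev.and (hgU₂.and hU₁ev)))
  refine ⟨e u₁ - c₁ u₁, ?_⟩
  have hNopen : IsOpen (qmap P O '' W) := hc.qmap_isOpenMap W hWopen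
  have hsN : s ∈ qmap P O '' W := ⟨u₁, hu₁W, hqu₁⟩
  filter_upwards [hNopen.eventually_mem hsN] with s' hs' hmem
  obtain ⟨w, hwW, hqw⟩ := hs'
  obtain ⟨⟨hwc₁, hwe, hweq⟩, hwgU₂, hwU₁⟩ := hWsub hwW
  have h1 : ch₁ s' = c₁ w := by rw [← hqw]; exact hval₁ w hwU₁
  have h2 : s' = qmap P O (g w) := by
    rw [← hqw]
    exact hc.qmap_eq_iff.2 ⟨g, hg, rfl⟩
  have h3 : ch₂ s' = c₂ (g w) := by rw [h2]; exact hval₂ (g w) hwgU₂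
  rw [h1, h3, ← he_app w, hweq]

end Ctx
end QCAux10
/-- **Quotient construction** (Lemma `lem:convergence`): if `S̃` is planar, `Õ ⊆ S̃` is
discrete, each point of `Õ` admits a basepoint changing translation automorphism, and the
collection `Γ` of these automorphisms forms a group, then there is a translation surface
`S ∈ M` with universal cover `S̃` such that `p_S⁻¹(o_S) = Õ`. -/
theorem quotient_construction (P : PointedTranslationSurface)
    (hplanar : IsPlanar P) (O : Set P.X)
    (hdisc : ∀ x : P.X, ¬ AccPt x (Filter.principal O))
    (hbc : ∀ o ∈ O, ∃ h : P.X ≃ₜ P.X,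
      IsTranslationIsoCharts P.toTranslationSurface P.toTranslationSurface h ∧
      h o = P.basepoint)
    (hone : Homeomorph.refl P.X ∈ bcAutos P O)
    (hinv : ∀ h ∈ bcAutos P O, h.symm ∈ bcAutos P O)
    (hmul : ∀ g ∈ bcAutos P O, ∀ h ∈ bcAutos P O, g.trans h ∈ bcAutos P O) :
    ∃ (S : PointedTranslationSurface) (p : P.X → S.X),
      IsTranslationCover P S p ∧ p ⁻¹' {S.basepoint} = O := by
  have hc : Ctx P O := ⟨hplanar, hdisc, hbc, hone, hinv, hmul⟩
  haveI hT2 : T2Space (QSp P O) := hc.qsp_t2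
  haveI hConn : ConnectedSpace (QSp P O) := hc.qsp_conn
  haveI hSC : SimplyConnectedSpace P.X := by
    obtain ⟨e⟩ := hplanar
    have := e.contractibleSpace
    infer_instance
  set Scharts : Set (OpenPartialHomeomorph (QSp P O) Plane) :=
    {ch | ∀ a ∈ Ctx.qAtlas P O, TranslationCompatible ch a ∧ TranslationCompatible a ch}
    with hSch
  have hsub : Ctx.qAtlas P O ⊆ Scharts := fun ch hch a ha =>
    ⟨hc.qAtlas_compat ch hch a ha, hc.qAtlas_compat a ha ch hch⟩
  set Ssurf : TranslationSurface :=
    { X := QSp P O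
      top := inferInstance
      t2 := hT2
      conn := hConn
      charts := Scharts
      chart_cover := fun s => by
        obtain ⟨ch, hch, hs⟩ := hc.qAtlas_cover s
        exact ⟨ch, hsub hch, hs⟩
      compat := fun c₁ h₁ c₂ h₂ => engine_compat (fun y => hc.qAtlas_cover y) h₁ h₂
      maximal := fun ch hch a ha => hch a (hsub ha) } with hSsurf
  set S : PointedTranslationSurface :=
    { toTranslationSurface := Ssurf
      basepoint := qmap P O P.basepoint } with hS
  refine ⟨S, qmap P O, ⟨hc.qmap_covering, hSC, rfl, ?_⟩, ?_⟩
  · -- IsLocalTranslationMap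
    intro z
    obtain ⟨ch, c, U, hcm, hUopen, hzU, hUc, hsep, hsrc, hval⟩ := hc.chart_exists z
    refine ⟨c.restr U, restr_mem_charts P.toTranslationSurface hcm U, ch,
      hsub ⟨c, U, hcm, hUopen, hUc, hsep, hsrc, hval⟩, 0, ?_, ?_⟩
    · rw [OpenPartialHomeomorph.restr_source, hUopen.interior_eq]
      exact ⟨hUc hzU, hzU⟩
    · intro y hy
      rw [OpenPartialHomeomorph.restr_source, hUopen.interior_eq] at hy
      constructor
      · show qmap P O y ∈ ch.source
        rw [hsrc]
        exact ⟨y, hy.2, rfl⟩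
      · show ch (qmap P O y) = (c.restr U) y + 0
        rw [add_zero, hval y hy.2]
        rfl
  · -- fiber over the basepoint
    ext z
    simp only [Set.mem_preimage, Set.mem_singleton_iff]
    constructor
    · intro hz
      have := hc.qmap_eq_iff.1 hz
      exact hc.mem_O_iff.2 this
    · intro hz
      exact hc.qmap_eq_iff.2 (hc.mem_O_iff.1 hz)
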